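/- Let d ≥ 1, let Ω ⊆ ℝ² be open and bounded, let ε > 0, and let f : ℝ^d → [0, ∞) be continuous with f(v) > f(v/|v|) whenever |v| > 1. Suppose u : Ω̄ → ℝ^d is Lipschitz, satisfies |u(x)| ≤ 1 for all x ∈ ∂Ω, and minimizes the functional w ↦ ∫_Ω ( (1/2)|∇w(x)|² + ε⁻² f(w(x)) ) dx among all Lipschitz maps w : Ω̄ → ℝ^d with w = u on ∂Ω. Then |u(x)| ≤ 1 for all x ∈ Ω̄. -/

import Mathlib

open Metric Set MeasureTheory Filter

noncomputable section

abbrev E2 : Type := EuclideanSpace ℝ (Fin 2)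

/-- Squared Euclidean (Hilbert–Schmidt) norm of the gradient of u : ℝ² → ℝ^d. -/
def gradSqV (d : ℕ) (u : E2 → EuclideanSpace ℝ (Fin d)) (x : E2) : ℝ :=
  ∑ i, ‖fderiv ℝ (fun y => u y i) x‖ ^ 2

/-- The energy ∫_U ( (1/2)|∇u|² + ε⁻² f(u) ). -/
def energyV (d : ℕ) (ε : ℝ) (f : EuclideanSpace ℝ (Fin d) → ℝ)
    (u : E2 → EuclideanSpace ℝ (Fin d)) (U : Set E2) : ℝ :=
  ∫ x in U, ((1/2) * gradSqV d u x + (1/ε^2) * f (u x))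

/-- Norm squared of a functional on ℝ² as sum of squares of values on the basis. -/
lemma fn_norm_sq (ℓ : E2 →L[ℝ] ℝ) :
    ‖ℓ‖ ^ 2 = ∑ j, (ℓ (EuclideanSpace.basisFun (Fin 2) ℝ j)) ^ 2 := by
  set v := (InnerProductSpace.toDual ℝ E2).symm ℓ with hv
  have h1 : ∀ x : E2, (inner ℝ v x : ℝ) = ℓ x := fun x => InnerProductSpace.toDual_symm_apply
  have h2 : ‖v‖ = ‖ℓ‖ := LinearIsometryEquiv.norm_map _ _
  have h3 : ∀ j, ℓ (EuclideanSpace.basisFun (Fin 2) ℝ j) = v j := by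
    intro j
    rw [← h1]
    simp [EuclideanSpace.basisFun_apply, EuclideanSpace.inner_single_right]
  have h4 : ‖v‖ ^ 2 = ∑ j, (v j) ^ 2 := by
    rw [EuclideanSpace.norm_eq, Real.sq_sqrt (by positivity)]
    simp [Real.norm_eq_abs, sq_abs]
  rw [← h2, h4]
  exact Finset.sum_congr rfl fun j _ => by rw [h3]

/-- At a point of differentiability, the gradient square equals the sum of squared
column norms. -/
lemma gradSq_eq_cols {d : ℕ} {u : E2 → EuclideanSpace ℝ (Fin d)} {x : E2}
    (hu : DifferentiableAt ℝ u x) :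
    gradSqV d u x = ∑ j, ‖fderiv ℝ u x (EuclideanSpace.basisFun (Fin 2) ℝ j)‖ ^ 2 := by
  have hcoord : ∀ i, fderiv ℝ (fun y => u y i) x
      = (EuclideanSpace.proj i).comp (fderiv ℝ u x) := by
    intro i
    exact ((EuclideanSpace.proj (𝕜 := ℝ) i).hasFDerivAt.comp x hu.hasFDerivAt).fderiv
  unfold gradSqV
  rw [Finset.sum_congr rfl fun i _ => by rw [hcoord i, fn_norm_sq]]
  rw [Finset.sum_comm]
  refine Finset.sum_congr rfl fun j _ => ?_
  rw [EuclideanSpace.norm_eq, Real.sq_sqrt (by positivity)]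
  simp [Real.norm_eq_abs, sq_abs]

/-- Directional derivative comparison from a pointwise distance comparison. -/
lemma dir_le {E F G : Type*} [NormedAddCommGroup E] [NormedSpace ℝ E]
    [NormedAddCommGroup F] [NormedSpace ℝ F] [NormedAddCommGroup G] [NormedSpace ℝ G]
    {f : E → F} {g : E → G} {A : E →L[ℝ] F} {B : E →L[ℝ] G} {x : E}
    (hf : HasFDerivAt f A x) (hg : HasFDerivAt g B x)
    (h : ∀ y, ‖f y - f x‖ ≤ ‖g y - g x‖) (e : E) : ‖A e‖ ≤ ‖B e‖ := by
  have hf' : HasDerivAt (fun t : ℝ => f (x + t • e)) (A e) 0 := (hf.hasLineDerivAt e)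
  have hg' : HasDerivAt (fun t : ℝ => g (x + t • e)) (B e) 0 := (hg.hasLineDerivAt e)
  have tf := (hasDerivAt_iff_tendsto_slope.1 hf').norm
  have tg := (hasDerivAt_iff_tendsto_slope.1 hg').norm
  refine le_of_tendsto_of_tendsto tf tg ?_
  filter_upwards [self_mem_nhdsWithin] with t (ht : t ≠ 0)
  simp only [slope_def_module, sub_zero, ← smul_sub, norm_smul]
  have h0 : f (x + (0:ℝ) • e) = f x := by simp
  have h0' : g (x + (0:ℝ) • e) = g x := by simp
  rw [h0, h0']
  exact mul_le_mul_of_nonneg_left (h _) (norm_nonneg t⁻¹)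

/-- The radial projection onto the closed unit ball is 1-Lipschitz. -/
lemma projBall_lip {d : ℕ} :
    LipschitzWith 1 (fun v : EuclideanSpace ℝ (Fin d) => (max 1 ‖v‖)⁻¹ • v) := by
  refine LipschitzWith.of_dist_le_mul fun v w => ?_
  simp only [NNReal.coe_one, one_mul, dist_eq_norm]
  set r := ‖v‖ with hr
  set s := ‖w‖ with hs
  have hr0 : 0 ≤ r := norm_nonneg v
  have hs0 : 0 ≤ s := norm_nonneg w
  set m := max 1 r with hm
  set n := max 1 s with hn
  have hm1 : 1 ≤ m := le_max_left _ _
  have hn1 : 1 ≤ n := le_max_left _ _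
  have hmr : r ≤ m := le_max_right _ _
  have hns : s ≤ n := le_max_right _ _
  have hc : (inner ℝ v w : ℝ) ≤ r * s := real_inner_le_norm v w
  have hrm : r / m = min r 1 := by
    rcases le_total r 1 with h | h
    · rw [hm, max_eq_left h, div_one, min_eq_left h]
    · rw [hm, max_eq_right h, min_eq_right h, div_self (by linarith)]
  have hsn : s / n = min s 1 := by
    rcases le_total s 1 with h | h
    · rw [hn, max_eq_left h, div_one, min_eq_left h]
    · rw [hn, max_eq_right h, min_eq_right h, div_self (by linarith)]
  have key : (r / m - s / n) ^ 2 ≤ (r - s) ^ 2 := by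
    rw [hrm, hsn]
    rcases le_total r 1 with h | h <;> rcases le_total s 1 with h' | h' <;>
      simp [min_eq_left, min_eq_right, h, h'] <;> nlinarith
  have expand : ∀ (a b : ℝ) (x y : EuclideanSpace ℝ (Fin d)),
      ‖a • x - b • y‖ ^ 2 = a^2 * ‖x‖^2 - 2 * (a * b * inner ℝ x y) + b^2 * ‖y‖^2 := by
    intro a b x y
    rw [norm_sub_sq_real, real_inner_smul_left, real_inner_smul_right, norm_smul, norm_smul]
    simp [mul_pow, Real.norm_eq_abs, sq_abs]
    ring
  have hgoal_sq : ‖m⁻¹ • v - n⁻¹ • w‖ ^ 2 ≤ ‖v - w‖ ^ 2 := by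
    have e1 := expand m⁻¹ n⁻¹ v w
    have e2 : ‖v - w‖^2 = r^2 - 2 * (inner ℝ v w : ℝ) + s^2 := by
      rw [norm_sub_sq_real]
    rw [e1, e2]
    have hab : m⁻¹ * n⁻¹ ≤ 1 := by
      rw [← one_div, ← one_div]
      calc 1/m * (1/n) ≤ 1 * 1 := by
            apply mul_le_mul <;> first
              | exact div_le_one_of_le₀ (by linarith) (by linarith)
              | positivity
        _ = 1 := by ring
    have h1 : (0:ℝ) ≤ 1 - m⁻¹ * n⁻¹ := by linarith
    have h2 : (0:ℝ) ≤ r * s - inner ℝ v w := by linarith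
    have key' : (m⁻¹ * r - n⁻¹ * s)^2 ≤ (r - s)^2 := by
      have e3 : m⁻¹ * r = r / m := by ring
      have e4 : n⁻¹ * s = s / n := by ring
      rw [e3, e4]; exact key
    nlinarith [mul_nonneg h1 h2]
  calc ‖m⁻¹ • v - n⁻¹ • w‖ = Real.sqrt (‖m⁻¹ • v - n⁻¹ • w‖^2) := by
        rw [Real.sqrt_sq (norm_nonneg _)]
    _ ≤ Real.sqrt (‖v - w‖^2) := Real.sqrt_le_sqrt hgoal_sq
    _ = ‖v - w‖ := Real.sqrt_sq (norm_nonneg _)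

/-- Coordinates of Euclidean space are 1-Lipschitz. -/
lemma coord_lip {d : ℕ} (i : Fin d) :
    LipschitzWith 1 (fun v : EuclideanSpace ℝ (Fin d) => v i) := by
  refine LipschitzWith.of_dist_le_mul fun v w => ?_
  rw [NNReal.coe_one, one_mul, EuclideanSpace.dist_eq]
  calc dist (v i) (w i) = Real.sqrt (dist (v i) (w i) ^ 2) :=
        (Real.sqrt_sq dist_nonneg).symm
    _ ≤ Real.sqrt (∑ j, dist (v j) (w j) ^ 2) := by
        apply Real.sqrt_le_sqrt
        exact Finset.single_le_sum (f := fun j => dist (v j) (w j) ^ 2)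
          (fun j _ => by positivity) (Finset.mem_univ i)

/-- Everywhere bound on gradSqV for a function Lipschitz on a neighborhood. -/
lemma gradSq_bound {d : ℕ} {u : E2 → EuclideanSpace ℝ (Fin d)} {L : NNReal} {Ω : Set E2}
    (hΩ : IsOpen Ω) (hL : LipschitzOnWith L u (closure Ω)) :
    ∀ x ∈ Ω, gradSqV d u x ≤ d * (L:ℝ)^2 := by
  intro x hx
  have hnb : closure Ω ∈ nhds x := mem_nhds_iff.2 ⟨Ω, subset_closure, hΩ, hx⟩
  have hbd : ∀ i : Fin d, ‖fderiv ℝ (fun y => u y i) x‖ ≤ (L:ℝ) := by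
    intro i
    have hlipi : LipschitzOnWith (1 * L) (fun y => u y i) (closure Ω) :=
      (coord_lip i).comp_lipschitzOnWith hL
    have := norm_fderiv_le_of_lipschitzOn ℝ hnb hlipi
    simpa using this
  calc gradSqV d u x = ∑ i : Fin d, ‖fderiv ℝ (fun y => u y i) x‖^2 := rfl
    _ ≤ ∑ _i : Fin d, (L:ℝ)^2 :=
        Finset.sum_le_sum fun i _ => by
          have := hbd i
          nlinarith [norm_nonneg (fderiv ℝ (fun y => u y i) x)]
    _ = d * (L:ℝ)^2 := by simp [Finset.sum_const, nsmul_eq_mul]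

lemma gradSq_measurable {d : ℕ} (u : E2 → EuclideanSpace ℝ (Fin d)) :
    Measurable (gradSqV d u) := by
  apply Finset.measurable_sum
  intro i _
  exact ((measurable_fderiv ℝ _).norm).pow_const 2

set_option maxHeartbeats 2000000 in
/-- L^∞ bound for minimizers: if f(v) > f(v/|v|) for |v| > 1, u is Lipschitz on Ω̄ with
|u| ≤ 1 on ∂Ω and u minimizes the energy among Lipschitz maps with its own boundary
values, then |u| ≤ 1 on all of Ω̄. -/
theorem stmt16 (d : ℕ) (hd : 1 ≤ d)
    (Ω : Set E2) (hΩ_open : IsOpen Ω) (hΩ_bdd : Bornology.IsBounded Ω)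
    (ε : ℝ) (hε : 0 < ε)
    (f : EuclideanSpace ℝ (Fin d) → ℝ) (hf_cont : Continuous f)
    (hf_nonneg : ∀ v, 0 ≤ f v)
    (hf_gt : ∀ v : EuclideanSpace ℝ (Fin d), 1 < ‖v‖ → f (‖v‖⁻¹ • v) < f v)
    (u : E2 → EuclideanSpace ℝ (Fin d))
    (hu_lip : ∃ L : NNReal, LipschitzOnWith L u (closure Ω))
    (hu_bd : ∀ x ∈ frontier Ω, ‖u x‖ ≤ 1)
    (hu_min : ∀ w : E2 → EuclideanSpace ℝ (Fin d),
      (∃ L : NNReal, LipschitzOnWith L w (closure Ω)) →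
      (∀ x ∈ frontier Ω, w x = u x) →
      energyV d ε f u Ω ≤ energyV d ε f w Ω) :
    ∀ x ∈ closure Ω, ‖u x‖ ≤ 1 := by
  by_contra hcon
  push_neg at hcon
  obtain ⟨x₀, hx₀c, hx₀⟩ := hcon
  obtain ⟨L, hL⟩ := hu_lip
  -- x₀ is an interior point
  have hx₀Ω : x₀ ∈ Ω := by
    rw [closure_eq_self_union_frontier] at hx₀c
    rcases hx₀c with h | h
    · exact h
    · exact absurd (hu_bd x₀ h) (not_le.2 hx₀)
  -- the projection map and the competitor w
  set P : EuclideanSpace ℝ (Fin d) → EuclideanSpace ℝ (Fin d) :=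
    fun v => (max 1 ‖v‖)⁻¹ • v with hPdef
  have hP : LipschitzWith 1 P := projBall_lip
  have hPeq : ∀ v : EuclideanSpace ℝ (Fin d), ‖v‖ ≤ 1 → P v = v := by
    intro v hv
    simp only [hPdef, max_eq_left hv, inv_one, one_smul]
  have hPlt : ∀ v : EuclideanSpace ℝ (Fin d), 1 < ‖v‖ → f (P v) < f v := by
    intro v hv
    have : max 1 ‖v‖ = ‖v‖ := max_eq_right hv.le
    rw [hPdef]; dsimp only; rw [this]
    exact hf_gt v hv
  have hPle : ∀ v : EuclideanSpace ℝ (Fin d), f (P v) ≤ f v := by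
    intro v
    rcases le_or_gt ‖v‖ 1 with h | h
    · rw [hPeq v h]
    · exact (hPlt v h).le
  set w : E2 → EuclideanSpace ℝ (Fin d) := fun y => P (u y) with hwdef
  have hwlip : LipschitzOnWith (1 * L) w (closure Ω) := hP.comp_lipschitzOnWith hL
  have hwu : ∀ x ∈ frontier Ω, w x = u x := by
    intro x hx
    exact hPeq (u x) (hu_bd x hx)
  -- basic topology / measure facts
  have hΩm : MeasurableSet Ω := hΩ_open.measurableSet
  have hcpt : IsCompact (closure Ω) :=
    Metric.isCompact_of_isClosed_isBounded isClosed_closure hΩ_bdd.closure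
  have hvol : volume Ω ≠ ⊤ :=
    ((measure_mono subset_closure).trans_lt hcpt.measure_lt_top).ne
  have hu_cont : ContinuousOn u (closure Ω) := hL.continuousOn
  have hw_cont : ContinuousOn w (closure Ω) := hP.continuous.comp_continuousOn hu_cont
  -- a closed ball around x₀ where ‖u‖ > 1
  have hcx : ContinuousAt u x₀ :=
    hu_cont.continuousAt (mem_nhds_iff.2 ⟨Ω, subset_closure, hΩ_open, hx₀Ω⟩)
  have hev : ∀ᶠ x in nhds x₀, 1 < ‖u x‖ ∧ x ∈ Ω := by
    have h1 : ∀ᶠ x in nhds x₀, 1 < ‖u x‖ := hcx.norm.eventually (lt_mem_nhds hx₀)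
    exact h1.and (hΩ_open.mem_nhds hx₀Ω)
  obtain ⟨r, hr, hball⟩ := Metric.eventually_nhds_iff_ball.1 hev
  set B : Set E2 := closedBall x₀ (r/2) with hBdef
  have hBsub : B ⊆ Ω := fun x hx =>
    (hball x (lt_of_le_of_lt (mem_closedBall.1 hx) (by linarith))).2
  have hBgt : ∀ x ∈ B, 1 < ‖u x‖ := fun x hx =>
    (hball x (lt_of_le_of_lt (mem_closedBall.1 hx) (by linarith))).1
  have hBm : MeasurableSet B := measurableSet_closedBall
  have hBcpt : IsCompact B := isCompact_closedBall _ _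
  have hBne : B.Nonempty := ⟨x₀, mem_closedBall_self (by linarith)⟩
  -- minimum of the gap on B
  have hg_cont : ContinuousOn (fun x => f (u x) - f (w x)) B := by
    have h1 := (hf_cont.comp_continuousOn hu_cont).mono (hBsub.trans subset_closure)
    have h2 := (hf_cont.comp_continuousOn hw_cont).mono (hBsub.trans subset_closure)
    exact h1.sub h2
  obtain ⟨z, hzB, hzmin⟩ := hBcpt.exists_isMinOn hBne hg_cont
  set c : ℝ := f (u z) - f (w z) with hcdef
  have hc : 0 < c := sub_pos.2 (hPlt (u z) (hBgt z hzB))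
  -- integrability
  have hint_gen : ∀ (v : E2 → EuclideanSpace ℝ (Fin d)) (K : NNReal),
      LipschitzOnWith K v (closure Ω) →
      IntegrableOn (fun x => (1/2) * gradSqV d v x + (1/ε^2) * f (v x)) Ω volume := by
    intro v K hK
    have hv_cont : ContinuousOn v (closure Ω) := hK.continuousOn
    refine Integrable.add ?_ ?_
    · refine ⟨(((gradSq_measurable v).const_mul (1/2)).aestronglyMeasurable).restrict,
        HasFiniteIntegral.restrict_of_bounded (C := (1/2) * (d * (K:ℝ)^2))
          hvol.lt_top ?_⟩
      filter_upwards [ae_restrict_mem hΩm] with x hxΩ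
      have hbd := gradSq_bound hΩ_open hK x hxΩ
      have hnn : 0 ≤ gradSqV d v x :=
        Finset.sum_nonneg fun i _ => by positivity
      rw [Real.norm_eq_abs, abs_of_nonneg (by linarith)]
      linarith
    · obtain ⟨M, hM⟩ := hcpt.exists_bound_of_continuousOn
        (hf_cont.comp_continuousOn hv_cont)
      refine ⟨(ContinuousOn.aestronglyMeasurable
          (((hf_cont.comp_continuousOn hv_cont).mono subset_closure).const_smul (1/ε^2))
          hΩm), HasFiniteIntegral.restrict_of_bounded (C := (1/ε^2) * M)
          hvol.lt_top ?_⟩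
      filter_upwards [ae_restrict_mem hΩm] with x hxΩ
      have h1 := hM x (subset_closure hxΩ)
      have hεpos : (0:ℝ) < 1/ε^2 := by positivity
      rw [Real.norm_eq_abs, abs_mul, abs_of_nonneg hεpos.le]
      have := abs_nonneg (f (v x))
      have h2 : |f (v x)| ≤ M := by
        simpa [Real.norm_eq_abs] using h1
      nlinarith
  have hFu_int : IntegrableOn
      (fun x => (1/2) * gradSqV d u x + (1/ε^2) * f (u x)) Ω volume :=
    hint_gen u L hL
  have hFw_int : IntegrableOn
      (fun x => (1/2) * gradSqV d w x + (1/ε^2) * f (w x)) Ω volume :=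
    hint_gen w (1 * L) hwlip
  -- a.e. gradient comparison
  have hae : ∀ᵐ x ∂(volume.restrict Ω), gradSqV d w x ≤ gradSqV d u x := by
    have h1 : ∀ᵐ x ∂(volume.restrict (closure Ω)),
        DifferentiableWithinAt ℝ u (closure Ω) x :=
      hL.ae_differentiableWithinAt isClosed_closure.measurableSet
    have h2 : ∀ᵐ x ∂(volume.restrict (closure Ω)),
        DifferentiableWithinAt ℝ w (closure Ω) x :=
      hwlip.ae_differentiableWithinAt isClosed_closure.measurableSet
    have h1' := ae_restrict_of_ae_restrict_of_subset subset_closure h1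
    have h2' := ae_restrict_of_ae_restrict_of_subset subset_closure h2
    filter_upwards [h1', h2', ae_restrict_mem hΩm] with x hdu hdw hxΩ
    have hnb : closure Ω ∈ nhds x := mem_nhds_iff.2 ⟨Ω, subset_closure, hΩ_open, hxΩ⟩
    have hu' : DifferentiableAt ℝ u x := hdu.differentiableAt hnb
    have hw' : DifferentiableAt ℝ w x := hdw.differentiableAt hnb
    rw [gradSq_eq_cols hu', gradSq_eq_cols hw']
    refine Finset.sum_le_sum fun j _ => ?_
    have hdist : ∀ y, ‖w y - w x‖ ≤ ‖u y - u x‖ := by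
      intro y
      have := hP.dist_le_mul (u y) (u x)
      simpa [dist_eq_norm] using this
    have hle := dir_le hw'.hasFDerivAt hu'.hasFDerivAt hdist
      (EuclideanSpace.basisFun (Fin 2) ℝ j)
    exact pow_le_pow_left₀ (norm_nonneg _) hle 2
  -- the indicator
  set κ : ℝ := (1/ε^2) * c with hκdef
  have hκ : 0 < κ := by positivity
  have hind_int : Integrable (B.indicator fun _ => κ) (volume.restrict Ω) := by
    refine (integrableOn_const hvol).indicator hBm
  -- pointwise a.e. inequality
  have hptw : ∀ᵐ x ∂(volume.restrict Ω),
      ((1/2) * gradSqV d w x + (1/ε^2) * f (w x)) + B.indicator (fun _ => κ) x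
        ≤ ((1/2) * gradSqV d u x + (1/ε^2) * f (u x)) := by
    filter_upwards [hae, ae_restrict_mem hΩm] with x hgrad hxΩ
    have hf1 : f (w x) ≤ f (u x) := hPle (u x)
    have hεpos : (0:ℝ) < 1/ε^2 := by positivity
    by_cases hxB : x ∈ B
    · rw [indicator_of_mem hxB]
      have hcle : c ≤ f (u x) - f (w x) := hzmin hxB
      have := mul_le_mul_of_nonneg_left hcle hεpos.le
      rw [hκdef]
      nlinarith
    · rw [indicator_of_notMem hxB]
      nlinarith
  -- integrate
  have hint : ∫ x in Ω, (((1/2) * gradSqV d w x + (1/ε^2) * f (w x))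
        + B.indicator (fun _ => κ) x)
      ≤ ∫ x in Ω, ((1/2) * gradSqV d u x + (1/ε^2) * f (u x)) :=
    integral_mono_ae (hFw_int.add hind_int) hFu_int hptw
  have hsplit : ∫ x in Ω, (((1/2) * gradSqV d w x + (1/ε^2) * f (w x))
        + B.indicator (fun _ => κ) x)
      = energyV d ε f w Ω + ∫ x in Ω, B.indicator (fun _ => κ) x :=
    integral_add hFw_int hind_int
  have hindval : ∫ x in Ω, B.indicator (fun _ => κ) x
      = (volume B).toReal * κ := by
    rw [integral_indicator_const _ hBm, measureReal_restrict_apply hBm,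
      inter_eq_left.2 hBsub, smul_eq_mul, measureReal_def]
  have hvolB : 0 < (volume B).toReal := by
    refine ENNReal.toReal_pos (ne_of_gt (measure_closedBall_pos volume x₀ (by linarith))) ?_
    exact (measure_closedBall_lt_top).ne
  have hmin := hu_min w ⟨1 * L, hwlip⟩ hwu
  rw [energyV, energyV] at hmin
  have : energyV d ε f w Ω + (volume B).toReal * κ
      ≤ energyV d ε f u Ω := by
    rw [← hindval, ← hsplit]
    exact hint
  rw [energyV, energyV] at this
  nlinarith [mul_pos hvolB hκ]
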